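/- For η > 2, the leading-order expansion of the corner success-probability exponent for large s gives: λ ∫_0^{π/2} ∫_0^∞ [s g(r)/(1+s g(r))] r dr dφ ∼ (λπ/4) s^{2/η} / sinc(2π/η) as s → ∞, where sinc(x) = sin(x)/x. -/

import Mathlib

open MeasureTheory Real Filter Asymptotics Set


lemma beta_reflection (a : ℝ) (h0 : 0 < a) (h1 : a < 1) :
    ∫ x in Set.Ioo (0:ℝ) 1, x ^ (a-1) * (1-x) ^ (-a) = π / Real.sin (π * a) := by
  have hB : Complex.betaIntegral a (1-a) = ((π / Real.sin (π*a) : ℝ) : ℂ) := by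
    have h := Complex.Gamma_mul_Gamma_eq_betaIntegral (s := (a:ℂ)) (t := 1 - (a:ℂ))
      (by simpa using h0) (by simp [Complex.sub_re]; linarith)
    have h2 := Complex.Gamma_mul_Gamma_one_sub (a:ℂ)
    rw [h2] at h
    have h3 : (a:ℂ) + (1 - (a:ℂ)) = 1 := by ring
    rw [h3, Complex.Gamma_one, one_mul] at h
    push_cast
    rw [← h]
  have hI : Complex.betaIntegral a (1-a)
      = ((∫ x in (0:ℝ)..1, x ^ (a-1) * (1-x) ^ (-a) : ℝ) : ℂ) := by
    rw [Complex.betaIntegral, ← intervalIntegral.integral_ofReal]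
    apply intervalIntegral.integral_congr
    intro x hx
    rw [Set.uIcc_of_le zero_le_one] at hx
    obtain ⟨hx0, hx1⟩ := hx
    have hx1' : (0:ℝ) ≤ 1 - x := by linarith
    have e1 : ((a:ℂ)) - 1 = ((a - 1 : ℝ):ℂ) := by push_cast; ring
    have e2 : ((1 - a : ℝ):ℂ) - 1 = ((-a : ℝ):ℂ) := by push_cast; ring
    have e3 : (1:ℂ) - (x:ℂ) = ((1 - x : ℝ):ℂ) := by push_cast; ring
    simp only []
    rw [show ((1:ℂ) - (a:ℂ) - 1) = ((-a:ℝ):ℂ) by push_cast; ring, e1, e3,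
      ← Complex.ofReal_cpow hx0, ← Complex.ofReal_cpow hx1']
    push_cast
    ring
  have := hI.symm.trans hB
  have hR : (∫ x in (0:ℝ)..1, x ^ (a-1) * (1-x) ^ (-a)) = π / Real.sin (π*a) := by
    exact_mod_cast this
  rw [← hR, intervalIntegral.integral_of_le zero_le_one,
    MeasureTheory.integral_Ioc_eq_integral_Ioo]

lemma image_div_one_sub : (fun x : ℝ => x / (1 - x)) '' Set.Ioo 0 1 = Set.Ioi 0 := by
  ext u
  constructor
  · rintro ⟨x, ⟨hx0, hx1⟩, rfl⟩
    exact div_pos hx0 (by linarith)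
  · intro hu
    refine ⟨u / (1 + u), ⟨div_pos hu (by linarith [(mem_Ioi.mp hu).le]), ?_⟩, ?_⟩
    · rw [div_lt_one (by linarith [mem_Ioi.mp hu])]; linarith [mem_Ioi.mp hu]
    · have h1u : (0:ℝ) < 1 + u := by linarith [mem_Ioi.mp hu]
      field_simp
      ring

lemma mellin_cauchy (a : ℝ) (h0 : 0 < a) (h1 : a < 1) :
    ∫ u in Set.Ioi (0:ℝ), u ^ (a-1) / (1+u) = π / Real.sin (π * a) := by
  have hderiv : ∀ x ∈ Set.Ioo (0:ℝ) 1, HasDerivWithinAt (fun x : ℝ => x / (1 - x))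
      ((1 - x)⁻¹ ^ 2) (Set.Ioo 0 1) x := by
    intro x hx
    have hne : (1:ℝ) - x ≠ 0 := by have := hx.2; intro h; nlinarith [hx.2]
    have : HasDerivAt (fun x : ℝ => x / (1 - x))
        ((1 * (1 - x) - x * (0 - 1)) / (1 - x) ^ 2) x :=
      (hasDerivAt_id x).div ((hasDerivAt_const x 1).sub (hasDerivAt_id x)) hne
    have e : (1 - x)⁻¹ ^ 2 = (1 * (1 - x) - x * (0 - 1)) / (1 - x) ^ 2 := by
      rw [inv_pow, ← one_div]; congr 1; ring
    rw [e]; exact this.hasDerivWithinAt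
  have hinj : Set.InjOn (fun x : ℝ => x / (1 - x)) (Set.Ioo 0 1) := by
    intro x hx y hy hxy
    have hx1 : (1:ℝ) - x ≠ 0 := by have := hx.2; intro h; nlinarith
    have hy1 : (1:ℝ) - y ≠ 0 := by have := hy.2; intro h; nlinarith
    field_simp at hxy
    linarith
  have := MeasureTheory.integral_image_eq_integral_abs_deriv_smul measurableSet_Ioo hderiv hinj
      (fun u : ℝ => u ^ (a-1) / (1+u))
  rw [image_div_one_sub] at this
  rw [this, ← beta_reflection a h0 h1]
  apply setIntegral_congr_fun measurableSet_Ioo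
  intro x hx
  obtain ⟨hx0, hx1⟩ := hx
  have h1x : (0:ℝ) < 1 - x := by linarith
  have hfx : (0:ℝ) < x / (1 - x) := div_pos hx0 h1x
  have h1fx : 1 + x / (1 - x) = (1 - x)⁻¹ := by field_simp; ring
  simp only [smul_eq_mul]
  rw [h1fx, Real.div_rpow hx0.le h1x.le, abs_of_nonneg (by positivity)]
  rw [← Real.rpow_neg_one (1 - x)]
  rw [← Real.rpow_natCast ((1-x) ^ (-1:ℝ)) 2, ← Real.rpow_mul h1x.le, div_div,
    ← Real.rpow_add h1x, div_eq_mul_inv, ← Real.rpow_neg h1x.le,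
    mul_comm ((1-x) ^ ((-1:ℝ) * (2:ℕ))), mul_assoc, ← Real.rpow_add h1x]
  norm_num
  left
  ring_nf

lemma intC (η : ℝ) (hη : 2 < η) :
    ∫ t in Set.Ioi (0:ℝ), t / (1 + t ^ η) = π / (η * Real.sin (2*π/η)) := by
  have hηpos : (0:ℝ) < η := by linarith
  have key := MeasureTheory.integral_comp_rpow_Ioi_of_pos
    (g := fun y : ℝ => (1/η) * (y ^ (2/η - 1) / (1+y))) hηpos
  have ha0 : (0:ℝ) < 2/η := by positivity
  have ha1 : 2/η < 1 := by rw [div_lt_one hηpos]; linarith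
  have hL : (∫ x in Set.Ioi (0:ℝ), (η * x ^ (η - 1)) •
      ((1/η) * ((x ^ η) ^ (2/η - 1) / (1 + x ^ η))))
      = ∫ t in Set.Ioi (0:ℝ), t / (1 + t ^ η) := by
    apply setIntegral_congr_fun measurableSet_Ioi
    intro x hx
    have hx0 : (0:ℝ) < x := hx
    have e1 : (x ^ η) ^ (2/η - 1) = x ^ (2 - η) := by
      rw [← Real.rpow_mul hx0.le]
      congr 1
      field_simp
    simp only [smul_eq_mul, e1]
    rw [show η * x ^ (η - 1) * (1 / η * (x ^ (2 - η) / (1 + x ^ η)))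
        = (η * (1/η)) * (x ^ (η-1) * x ^ (2-η)) / (1 + x ^ η) by ring,
      mul_one_div_cancel hηpos.ne', ← Real.rpow_add hx0,
      show η - 1 + (2 - η) = 1 by ring, Real.rpow_one, one_mul]
  rw [← hL, key]
  rw [integral_const_mul, mellin_cauchy (2/η) ha0 ha1]
  rw [show π * (2/η) = 2*π/η by ring]
  field_simp


lemma measC (η : ℝ) (hη : 2 < η) : Measurable (fun t : ℝ => t / (1 + t ^ η)) := by
  exact measurable_id.div ((continuous_const.add (Real.continuous_rpow_const (by linarith : (0:ℝ) ≤ η)))).measurable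

lemma intgC (η : ℝ) (hη : 2 < η) :
    IntegrableOn (fun t : ℝ => t / (1 + t ^ η)) (Set.Ioi 0) := by
  have hm := (measC η hη).aestronglyMeasurable (μ := volume)
  have h1 : IntegrableOn (fun t : ℝ => t / (1 + t ^ η)) (Set.Ioc 0 1) := by
    apply Integrable.mono' (integrable_const (1:ℝ)) (hm.restrict)
    filter_upwards [ae_restrict_mem measurableSet_Ioc] with t ht
    obtain ⟨ht0, ht1⟩ := ht
    have hd : (1:ℝ) ≤ 1 + t ^ η := by
      have := Real.rpow_nonneg ht0.le η; linarith
    rw [Real.norm_eq_abs, abs_of_nonneg (by positivity)]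
    rw [div_le_one (by linarith)]
    linarith
  have h2 : IntegrableOn (fun t : ℝ => t / (1 + t ^ η)) (Set.Ioi 1) := by
    apply Integrable.mono' (integrableOn_Ioi_rpow_of_lt (by linarith : 1 - η < -1) one_pos)
      (hm.restrict)
    filter_upwards [ae_restrict_mem measurableSet_Ioi] with t ht
    have ht0 : (0:ℝ) < t := lt_trans one_pos ht
    have htη : (0:ℝ) < t ^ η := Real.rpow_pos_of_pos ht0 η
    rw [Real.norm_eq_abs, abs_of_nonneg (by positivity)]
    rw [Real.rpow_sub ht0, Real.rpow_one]
    rw [div_le_div_iff₀ (by linarith) htη]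
    nlinarith [Real.rpow_nonneg ht0.le η]
  have := h1.union h2
  rwa [Set.Ioc_union_Ioi_eq_Ioi zero_le_one] at this

lemma tailC (η : ℝ) (hη : 2 < η) :
    Tendsto (fun s : ℝ => ∫ t in Set.Ioi (s ^ (-(1/η))), t / (1 + t ^ η)) atTop
      (nhds (∫ t in Set.Ioi (0:ℝ), t / (1 + t ^ η))) := by
  have hηpos : (0:ℝ) < η := by linarith
  have key : ∀ᶠ s in atTop, (∫ t in Set.Ioi (0:ℝ), t / (1 + t ^ η))
      - (∫ t in Set.Ioi (s ^ (-(1/η))), t / (1 + t ^ η))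
      = ∫ t in Set.Ioc (0:ℝ) (s ^ (-(1/η))), t / (1 + t ^ η) := by
    filter_upwards [eventually_gt_atTop (0:ℝ)] with s hs
    have hb : (0:ℝ) < s ^ (-(1/η)) := Real.rpow_pos_of_pos hs _
    have hsplit : Set.Ioc (0:ℝ) (s ^ (-(1/η))) ∪ Set.Ioi (s ^ (-(1/η))) = Set.Ioi (0:ℝ) :=
      Set.Ioc_union_Ioi_eq_Ioi hb.le
    rw [← hsplit, MeasureTheory.setIntegral_union (Set.Ioc_disjoint_Ioi le_rfl)
      measurableSet_Ioi ((intgC η hη).mono_set (by rw [← hsplit]; exact subset_union_left))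
      ((intgC η hη).mono_set (by rw [← hsplit]; exact subset_union_right))]
    ring
  have hbound : Tendsto (fun s : ℝ => ∫ t in Set.Ioc (0:ℝ) (s ^ (-(1/η))), t / (1 + t ^ η))
      atTop (nhds 0) := by
    apply squeeze_zero_norm' _ (show Tendsto (fun s : ℝ => s ^ (-(1/η)) * s ^ (-(1/η)))
      atTop (nhds 0) from by
        simpa using (tendsto_rpow_neg_atTop (by positivity : (0:ℝ) < 1/η)).mul
          (tendsto_rpow_neg_atTop (by positivity : (0:ℝ) < 1/η)))
    filter_upwards [eventually_gt_atTop (0:ℝ)] with s hs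
    have hb : (0:ℝ) < s ^ (-(1/η)) := Real.rpow_pos_of_pos hs _
    have : ‖∫ t in Set.Ioc (0:ℝ) (s ^ (-(1/η))), t / (1 + t ^ η)‖
        ≤ s ^ (-(1/η)) * (volume (Set.Ioc (0:ℝ) (s ^ (-(1/η))))).toReal := by
      apply norm_setIntegral_le_of_norm_le_const
      · rw [Real.volume_Ioc]; exact ENNReal.ofReal_lt_top
      · intro t ht
        obtain ⟨ht0, ht1⟩ := ht
        have hd : (1:ℝ) ≤ 1 + t ^ η := by
          have := Real.rpow_nonneg ht0.le η; linarith
        rw [Real.norm_eq_abs, abs_of_nonneg (by positivity)]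
        calc t / (1 + t ^ η) ≤ t / 1 := by
              apply div_le_div_of_nonneg_left ht0.le one_pos; linarith
          _ = t := div_one t
          _ ≤ _ := ht1
    rw [Real.volume_Ioc, ENNReal.toReal_ofReal (by linarith)] at this
    simpa using this
  have := (tendsto_const_nhds (x := ∫ t in Set.Ioi (0:ℝ), t / (1 + t ^ η))
      (f := atTop)).sub hbound
  rw [sub_zero] at this
  apply this.congr'
  filter_upwards [key] with s hs
  linarith


lemma inner_eval (η : ℝ) (hη : 2 < η) (s : ℝ) (hs : 0 < s) :
    (∫ r in Set.Ioi (0:ℝ), (s * min 1 (r ^ (-η)) / (1 + s * min 1 (r ^ (-η)))) * r)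
    = s/(1+s) * (1/2) + s^(2/η) * ∫ t in Set.Ioi (s ^ (-(1/η))), t / (1+t^η) := by
  have hη0 : (0:ℝ) < η := by linarith
  set G : ℝ → ℝ := fun r => (s * min 1 (r ^ (-η)) / (1 + s * min 1 (r ^ (-η)))) * r with hG
  have e1 : Set.EqOn G (fun r => (s/(1+s)) * r) (Set.Ioc 0 1) := by
    intro r hr
    have h1 : (1:ℝ) ≤ r ^ (-η) :=
      Real.one_le_rpow_of_pos_of_le_one_of_nonpos hr.1 hr.2 (by linarith)
    simp only [hG, min_eq_left h1, mul_one]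
  have e2 : Set.EqOn G (fun r => s * r / (s + r ^ η)) (Set.Ioi 1) := by
    intro r hr
    have hr0 : (0:ℝ) < r := lt_trans one_pos hr
    have hrη : (0:ℝ) < r ^ η := Real.rpow_pos_of_pos hr0 η
    have h1 : r ^ (-η) ≤ 1 :=
      Real.rpow_le_one_of_one_le_of_nonpos (le_of_lt hr) (by linarith)
    simp only [hG, min_eq_right h1]
    rw [Real.rpow_neg hr0.le]
    have hd : (0:ℝ) < 1 + s * (r ^ η)⁻¹ := by positivity
    field_simp
    ring
  have i1 : IntegrableOn G (Set.Ioc 0 1) := by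
    apply IntegrableOn.congr_fun _ (fun r hr => (e1 hr).symm) measurableSet_Ioc
    exact ((continuous_const.mul continuous_id).integrableOn_Ioc)
  have hmeas2 : Measurable (fun r : ℝ => s * r / (s + r ^ η)) :=
    (measurable_const.mul measurable_id).div
      ((continuous_const.add (Real.continuous_rpow_const hη0.le)).measurable)
  have i2 : IntegrableOn G (Set.Ioi 1) := by
    apply IntegrableOn.congr_fun _ (fun r hr => (e2 hr).symm) measurableSet_Ioi
    apply Integrable.mono'
      (((integrableOn_Ioi_rpow_of_lt (by linarith : 1 - η < -1) one_pos).const_mul s))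
      (hmeas2.aestronglyMeasurable.restrict)
    filter_upwards [ae_restrict_mem measurableSet_Ioi] with r hr
    have hr0 : (0:ℝ) < r := lt_trans one_pos hr
    have hrη : (0:ℝ) < r ^ η := Real.rpow_pos_of_pos hr0 η
    rw [Real.norm_eq_abs, abs_of_nonneg (by positivity)]
    rw [Real.rpow_sub hr0, Real.rpow_one, ← mul_div_assoc]
    gcongr
    linarith
  have hsplit : Set.Ioc (0:ℝ) 1 ∪ Set.Ioi 1 = Set.Ioi 0 := Set.Ioc_union_Ioi_eq_Ioi zero_le_one
  rw [show (∫ r in Set.Ioi (0:ℝ), (s * min 1 (r ^ (-η)) / (1 + s * min 1 (r ^ (-η)))) * r)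
      = ∫ r in Set.Ioi (0:ℝ), G r from rfl, ← hsplit,
    MeasureTheory.setIntegral_union (Set.Ioc_disjoint_Ioi le_rfl) measurableSet_Ioi i1 i2]
  congr 1
  · rw [setIntegral_congr_fun measurableSet_Ioc e1, MeasureTheory.integral_const_mul,
      ← intervalIntegral.integral_of_le zero_le_one, integral_id]
    norm_num
  · -- second piece
    set b : ℝ := s ^ (-(1/η)) with hb
    have hbpos : 0 < b := Real.rpow_pos_of_pos hs _
    have e3 : Set.EqOn (fun r => s * r / (s + r ^ η))
        (fun r => s ^ (1/η) * ((b * r) / (1 + (b * r) ^ η))) (Set.Ioi 1) := by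
      intro r hr
      have hr0 : (0:ℝ) < r := lt_trans one_pos hr
      have hrη : (0:ℝ) < r ^ η := Real.rpow_pos_of_pos hr0 η
      have hbη : b ^ η = s⁻¹ := by
        rw [hb, ← Real.rpow_mul hs.le, show (-(1/η))*η = -1 by field_simp,
          Real.rpow_neg_one]
      have e4 : (b * r) ^ η = s⁻¹ * r ^ η := by
        rw [Real.mul_rpow hbpos.le hr0.le, hbη]
      have e5 : s ^ (1/η) * b = 1 := by
        rw [hb, ← Real.rpow_add hs]
        norm_num
      simp only
      have hnum : s ^ (1/η) * (b * r * s) = s * r := by linear_combination (r*s) * e5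
      rw [e4, show (1 + s⁻¹ * r ^ η) = (s + r ^ η)/s from by field_simp,
        div_div_eq_mul_div, ← mul_div_assoc, hnum]
    have e23 : Set.EqOn G (fun r => s ^ (1/η) * ((b * r) / (1 + (b * r) ^ η)))
        (Set.Ioi 1) := fun r hr => (e2 hr).trans (e3 hr)
    rw [setIntegral_congr_fun measurableSet_Ioi e23, MeasureTheory.integral_const_mul,
      MeasureTheory.integral_comp_mul_left_Ioi (fun t => t / (1 + t ^ η)) 1 hbpos,
      mul_one, smul_eq_mul, ← mul_assoc]
    congr 1
    rw [hb, Real.rpow_neg hs.le, inv_inv, ← Real.rpow_add hs]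
    congr 1
    field_simp
    ring


/-- Leading-order large-s expansion of the corner success-probability exponent:
λ ∫_0^{π/2} ∫_0^∞ s g(r)/(1+s g(r)) r dr dφ ∼ (λπ/4) s^{2/η} / sinc(2π/η) as s → ∞,
where g(r) = min(1, r^{-η}) and sinc(x) = sin(x)/x. -/
theorem corner_exponent_asymptotic (η lam : ℝ) (hη : 2 < η) (hlam : 0 < lam) :
    (fun s : ℝ => lam * ∫ _φ in Set.Ioo (0:ℝ) (π/2), ∫ r in Set.Ioi (0:ℝ),
        (s * min 1 (r ^ (-η)) / (1 + s * min 1 (r ^ (-η)))) * r)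
      ~[atTop]
    (fun s : ℝ => (lam * π / 4) * s ^ (2/η) / (Real.sin (2*π/η) / (2*π/η))) := by
  have hη0 : (0:ℝ) < η := by linarith
  have ht0 : (0:ℝ) < 2*π/η := by positivity
  have htπ : 2*π/η < π := by
    rw [div_lt_iff₀ hη0]
    nlinarith [Real.pi_pos]
  have hsin : 0 < Real.sin (2*π/η) := Real.sin_pos_of_pos_of_lt_pi ht0 htπ
  set c : ℝ := ∫ t in Set.Ioi (0:ℝ), t / (1 + t ^ η) with hcdef
  have hc : c = π / (η * Real.sin (2*π/η)) := intC η hη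
  set J : ℝ → ℝ := fun s => ∫ t in Set.Ioi (s ^ (-(1/η))), t / (1 + t ^ η) with hJ
  -- outer integral of a constant
  have outer : ∀ s : ℝ, (∫ _φ in Set.Ioo (0:ℝ) (π/2), ∫ r in Set.Ioi (0:ℝ),
      (s * min 1 (r ^ (-η)) / (1 + s * min 1 (r ^ (-η)))) * r)
      = (π/2) * ∫ r in Set.Ioi (0:ℝ),
      (s * min 1 (r ^ (-η)) / (1 + s * min 1 (r ^ (-η)))) * r := by
    intro s
    rw [MeasureTheory.setIntegral_const, measureReal_def, Real.volume_Ioo, smul_eq_mul,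
      ENNReal.toReal_ofReal (by have := Real.pi_pos; linarith)]
    norm_num
  rw [Asymptotics.isEquivalent_iff_tendsto_one]
  swap
  · filter_upwards [eventually_gt_atTop (0:ℝ)] with s hs
    have : 0 < (lam * π / 4) * s ^ (2/η) / (Real.sin (2*π/η) / (2*π/η)) := by
      apply div_pos
      · have := Real.pi_pos
        positivity
      · exact div_pos hsin ht0
    exact this.ne'
  -- the limit computation
  have l1 : Tendsto (fun s : ℝ => s/(1+s)) atTop (nhds 1) := by
    have h0 : Tendsto (fun s : ℝ => (1+s)⁻¹) atTop (nhds 0) :=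
      tendsto_inv_atTop_zero.comp (tendsto_atTop_add_const_left atTop 1 tendsto_id)
    have h1 : Tendsto (fun s : ℝ => 1 - (1+s)⁻¹) atTop (nhds 1) := by
      simpa using (tendsto_const_nhds (x := (1:ℝ)) (f := atTop)).sub h0
    apply h1.congr'
    filter_upwards [eventually_gt_atTop (0:ℝ)] with s hs
    have : (1:ℝ) + s ≠ 0 := by linarith
    field_simp
    ring
  have l2 : Tendsto (fun s : ℝ => s ^ (-(2/η))) atTop (nhds 0) :=
    tendsto_rpow_neg_atTop (by positivity)
  have lJ : Tendsto J atTop (nhds c) := tailC η hη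
  have key : Tendsto (fun s : ℝ => (η * Real.sin (2*π/η) / π) *
      ((1/2) * (s/(1+s)) * s ^ (-(2/η)) + J s)) atTop
      (nhds ((η * Real.sin (2*π/η) / π) * ((1/2) * 1 * 0 + c))) := by
    exact (((tendsto_const_nhds.mul l1).mul l2).add lJ).const_mul _
  have hval : (η * Real.sin (2*π/η) / π) * ((1/2) * 1 * 0 + c) = 1 := by
    rw [hc]
    field_simp
    ring
  rw [hval] at key
  apply key.congr'
  filter_upwards [eventually_gt_atTop (0:ℝ)] with s hs
  have hin := inner_eval η hη s hs
  have hγ : (0:ℝ) < s ^ (2/η) := Real.rpow_pos_of_pos hs _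
  have hneg : s ^ (-(2/η)) = (s ^ (2/η))⁻¹ := Real.rpow_neg hs.le _
  have hπ := Real.pi_pos
  have h1s : (0:ℝ) < 1 + s := by linarith
  simp only [Pi.div_apply]
  rw [outer s, hin]
  simp only [hJ]
  set A : ℝ := ∫ t in Set.Ioi (s ^ (-(1/η))), t / (1 + t ^ η) with hA
  rw [hneg]
  field_simp
  ring
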